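/- arXiv:1901.10324 — 2 statements merged into one kernel-verified Lean document; each statement's English description precedes it below -/
import Mathlib

section
/- Let A be a C*-algebra and let (A_i)_{i ∈ I} be a family of closed *-subalgebras of A that is directed under inclusion and whose union is dense in A. Then A contains a nonzero projection if and only if there exists an index i such that A_i contains a nonzero projection. -/
open Filter Topology
set_option maxHeartbeats 1000000

theorem aux_proj {A : Type*} [NonUnitalCStarAlgebra A] (T : NonUnitalStarSubalgebra ℂ A)
    (hT : IsClosed (T : Set A)) (b : A) (hbT : b ∈ T) (hb : star b = b)
    (hbn : ‖b‖ ≤ 3/2) (hbd : ‖b * b - b‖ ≤ 1/20) :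
    ∃ q ∈ T, star q = q ∧ q * q = q ∧ ‖q - b‖ ≤ 5/16 := by
  set f : A → A := fun x => 3 • (x*x) - 2 • (x*(x*x)) with hf
  set seq : ℕ → A := fun n => f^[n] b with hseq
  have hseq0 : seq 0 = b := rfl
  have hseqS : ∀ n, seq (n+1) = f (seq n) := fun n => Function.iterate_succ_apply' f n b
  -- algebraic identities
  have idA : ∀ x : A, f x - x = (x*x - x) - 2 • (x * (x*x - x)) := by
    intro x
    simp only [hf, mul_sub, sub_mul, mul_add, add_mul, smul_sub, mul_assoc]
    abel
  have idB : ∀ x : A, f x * f x - f x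
      = 4 • ((x*x - x)*((x*x - x)*(x*x - x))) - 3 • ((x*x - x)*(x*x - x)) := by
    intro x
    simp only [hf, mul_sub, sub_mul, mul_add, add_mul, smul_sub, smul_mul_assoc,
      mul_smul_comm, mul_assoc, smul_smul]
    abel
  -- step norm bound
  have stepA : ∀ x : A, ‖x‖ ≤ 2 → ∀ P : ℝ, ‖x*x - x‖ ≤ P → ‖f x - x‖ ≤ 5 * P := by
    intro x hx P hP
    rw [idA x]
    set e := x*x - x with he
    have h1 : ‖(2:ℕ) • (x*e)‖ ≤ 2 * (‖x‖ * ‖e‖) := by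
      refine (norm_nsmul_le (n := 2) (a := x*e)).trans ?_
      push_cast
      gcongr
      exact norm_mul_le _ _
    have h0 : (0:ℝ) ≤ ‖e‖ := norm_nonneg e
    have h2 := norm_sub_le e ((2:ℕ) • (x*e))
    have h3 : (2:ℕ) • (x*e) = 2 • (x*e) := rfl
    rw [h3] at h2 h1
    have h4 : ‖x‖ * ‖e‖ ≤ 2 * ‖e‖ := by nlinarith
    linarith
  have stepB : ∀ x : A, ‖x*x - x‖ ≤ 1/20 → ‖f x * f x - f x‖ ≤ 4 * ‖x*x - x‖ * ‖x*x - x‖ := by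
    intro x hP
    rw [idB x]
    set e := x*x - x with he
    have h0 : (0:ℝ) ≤ ‖e‖ := norm_nonneg e
    have h1 : ‖(4:ℕ) • (e*(e*e))‖ ≤ 4 * (‖e‖ * (‖e‖ * ‖e‖)) := by
      refine (norm_nsmul_le (n := 4)).trans ?_
      push_cast
      gcongr
      exact (norm_mul_le _ _).trans (by gcongr; exact norm_mul_le _ _)
    have h2 : ‖(3:ℕ) • (e*e)‖ ≤ 3 * (‖e‖ * ‖e‖) := by
      refine (norm_nsmul_le (n := 3)).trans ?_
      push_cast
      gcongr
      exact norm_mul_le _ _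
    have h3 := norm_sub_le ((4:ℕ) • (e*(e*e))) ((3:ℕ) • (e*e))
    have h4 : ((4:ℕ) • (e*(e*e)) : A) = 4 • (e*(e*e)) := rfl
    have h5 : ((3:ℕ) • (e*e) : A) = 3 • (e*e) := rfl
    rw [h4, h5] at *
    nlinarith
  -- main invariant
  have key : ∀ n, seq n ∈ T ∧ star (seq n) = seq n ∧
      ‖seq n * seq n - seq n‖ ≤ (1/4)*(1/5)^(n+1) ∧ ‖seq n‖ ≤ 2 - (1/2)*(1/5)^n := by
    intro n
    induction n with
    | zero =>
      refine ⟨hbT, hb, ?_, ?_⟩ <;> simp [hseq0] <;> linarith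
    | succ n ih =>
      obtain ⟨hm, hs, hd, hn⟩ := ih
      set x := seq n with hx
      have hP5 : (0:ℝ) < (1/5)^(n+1) := by positivity
      have hP5' : ((1:ℝ)/5)^(n+1) ≤ 1/5 := by
        calc ((1:ℝ)/5)^(n+1) ≤ (1/5)^1 :=
              pow_le_pow_of_le_one (by norm_num) (by norm_num) (by omega)
          _ = 1/5 := pow_one _
      have hd20 : ‖x*x - x‖ ≤ 1/20 := by nlinarith
      have hnx : ‖x‖ ≤ 2 := by
        have : (0:ℝ) < (1/2)*(1/5)^n := by positivity
        linarith
      have hfx : seq (n+1) = f x := hseqS n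
      have hmemf : f x ∈ T :=
        sub_mem (nsmul_mem (mul_mem hm hm) 3) (nsmul_mem (mul_mem hm (mul_mem hm hm)) 2)
      have hstarf : star (f x) = f x := by
        simp [hf, star_sub, star_mul, hs, mul_assoc]
      have hstep : ‖f x - x‖ ≤ 5 * ((1/4)*(1/5)^(n+1)) := stepA x hnx _ hd
      refine ⟨hfx ▸ hmemf, hfx ▸ hstarf, ?_, ?_⟩
      · rw [hfx]
        have h1 := stepB x hd20
        have h0 : (0:ℝ) ≤ ‖x*x - x‖ := norm_nonneg _
        have h2 : (1/4:ℝ)*(1/5)^(n+1+1) = ((1/4)*(1/5)^(n+1))/5 := by ring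
        rw [h2]
        nlinarith
      · rw [hfx]
        have h3 : f x = x + (f x - x) := by abel
        calc ‖f x‖ = ‖x + (f x - x)‖ := by rw [← h3]
          _ ≤ ‖x‖ + ‖f x - x‖ := norm_add_le _ _
          _ ≤ (2 - (1/2)*(1/5)^n) + (5/4)*(1/5)^(n+1) := by linarith
          _ ≤ 2 - (1/2)*(1/5)^(n+1) := by
              have h5 : ((1:ℝ)/5)^(n+1) = (1/5)^n * (1/5) := pow_succ _ _
              have h6 : (0:ℝ) < (1/5)^n := by positivity
              rw [h5]; nlinarith
  -- Cauchy sequence and limit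
  have hdist : ∀ n, dist (seq n) (seq (n+1)) ≤ (5/4) * (1/5)^(n+1) := by
    intro n
    obtain ⟨hm, hs, hd, hn⟩ := key n
    rw [dist_eq_norm, norm_sub_rev, hseqS n]
    have hnx : ‖seq n‖ ≤ 2 := by
      have : (0:ℝ) < (1/2)*(1/5)^n := by positivity
      linarith
    have := stepA (seq n) hnx _ hd
    linarith
  have hdist' : ∀ n, dist (seq n) (seq (n+1)) ≤ (1/4) * (1/5)^n := by
    intro n
    refine (hdist n).trans (le_of_eq ?_)
    ring
  have hcauchy : CauchySeq seq := cauchySeq_of_le_geometric (1/5) (1/4) (by norm_num) hdist'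
  obtain ⟨q, hq⟩ := cauchySeq_tendsto_of_complete hcauchy
  refine ⟨q, ?_, ?_, ?_, ?_⟩
  · exact hT.mem_of_tendsto hq (.of_forall fun n => (key n).1)
  · exact tendsto_nhds_unique (by simpa only [(key _).2.1] using hq.star) hq
  · have h1 : Tendsto (fun n => seq n * seq n - seq n) atTop (𝓝 (q*q - q)) :=
      (hq.mul hq).sub hq
    have h2 : Tendsto (fun n => seq n * seq n - seq n) atTop (𝓝 0) := by
      have hb2 : ∀ n, ‖seq n * seq n - seq n‖ ≤ (1/20) * (1/5)^n :=
        fun n => ((key n).2.2.1).trans (le_of_eq (by ring))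
      refine squeeze_zero_norm hb2 ?_
      have := (tendsto_pow_atTop_nhds_zero_of_lt_one (by norm_num : (0:ℝ) ≤ 1/5)
        (by norm_num)).const_mul (1/20 : ℝ)
      simpa using this
    exact sub_eq_zero.mp (tendsto_nhds_unique h1 h2)
  · have := dist_le_of_le_geometric_of_tendsto₀ (1/5) (1/4) (by norm_num) hdist' hq
    rw [hseq0, dist_eq_norm, norm_sub_rev] at this
    calc ‖q - b‖ ≤ (1/4) / (1 - 1/5) := this
      _ ≤ 5/16 := by norm_num



/-- If a C*-algebra `A` is the closure of a directed union of closed *-subalgebras, then `A`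
contains a nonzero projection iff one of the subalgebras does. -/
theorem stmt1 {A : Type*} [NonUnitalCStarAlgebra A]
    {ι : Type*} (S : ι → NonUnitalStarSubalgebra ℂ A)
    (hclosed : ∀ i, IsClosed ((S i : NonUnitalStarSubalgebra ℂ A) : Set A))
    (hdir : Directed (· ≤ ·) S)
    (hdense : Dense (⋃ i, ((S i : NonUnitalStarSubalgebra ℂ A) : Set A))) :
    (∃ p : A, p ≠ 0 ∧ star p = p ∧ p * p = p) ↔
      ∃ i, ∃ p ∈ S i, p ≠ 0 ∧ star p = p ∧ p * p = p := by
  constructor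
  · rintro ⟨p, hp0, hps, hpi⟩
    -- ‖p‖ = 1
    have hnp : ‖p‖ = 1 := by
      have h1 : ‖p‖ * ‖p‖ = ‖p‖ := by
        rw [← CStarRing.norm_star_mul_self (x := p), hps, hpi]
      have h2 : ‖p‖ ≠ 0 := norm_ne_zero_iff.mpr hp0
      exact mul_right_cancel₀ h2 (by rw [h1, one_mul])
    obtain ⟨a, haU, hda⟩ := hdense.exists_dist_lt p (show (0:ℝ) < 1/100 by norm_num)
    rw [Set.mem_iUnion] at haU
    obtain ⟨i, hai⟩ := haU
    have hap : ‖a - p‖ ≤ 1/100 := by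
      rw [dist_eq_norm, norm_sub_rev] at hda
      linarith
    set b : A := (2:ℂ)⁻¹ • (a + star a) with hbdef
    have hbT : b ∈ S i := SMulMemClass.smul_mem _ (add_mem hai (star_mem hai))
    have hbs : star b = b := by
      simp [hbdef, star_smul, star_add, star_star, add_comm]
    have hbp : ‖b - p‖ ≤ 1/100 := by
      have h1 : b - p = (2:ℂ)⁻¹ • ((a - p) + star (a - p)) := by
        rw [hbdef, star_sub, hps]
        module
      rw [h1]
      calc ‖(2:ℂ)⁻¹ • ((a - p) + star (a - p))‖
          = ‖(2:ℂ)⁻¹‖ * ‖(a - p) + star (a - p)‖ := norm_smul _ _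
        _ ≤ ‖(2:ℂ)⁻¹‖ * (‖a - p‖ + ‖star (a - p)‖) := by
            gcongr; exact norm_add_le _ _
        _ = (1/2) * (‖a - p‖ + ‖a - p‖) := by
            rw [norm_star]; norm_num
        _ ≤ 1/100 := by linarith
    have hbn : ‖b‖ ≤ 3/2 := by
      calc ‖b‖ = ‖p + (b - p)‖ := by rw [add_sub_cancel]
        _ ≤ ‖p‖ + ‖b - p‖ := norm_add_le _ _
        _ ≤ 3/2 := by rw [hnp]; linarith
    have hbd : ‖b * b - b‖ ≤ 1/20 := by
      have hid : b * b - b = b * (b - p) + (b - p) * p - (b - p) := by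
        rw [mul_sub, sub_mul, hpi]
        abel
      rw [hid]
      calc ‖b * (b - p) + (b - p) * p - (b - p)‖
          ≤ ‖b * (b - p) + (b - p) * p‖ + ‖b - p‖ := norm_sub_le _ _
        _ ≤ ‖b * (b - p)‖ + ‖(b - p) * p‖ + ‖b - p‖ := by
            linarith [norm_add_le (b * (b - p)) ((b - p) * p)]
        _ ≤ ‖b‖ * ‖b - p‖ + ‖b - p‖ * ‖p‖ + ‖b - p‖ := by
            linarith [norm_mul_le b (b - p), norm_mul_le (b - p) p]
        _ ≤ (3/2) * (1/100) + (1/100) * 1 + 1/100 := by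
            have h0 : (0:ℝ) ≤ ‖b - p‖ := norm_nonneg _
            have h1 : (0:ℝ) ≤ ‖b‖ := norm_nonneg _
            rw [hnp]
            nlinarith
        _ ≤ 1/20 := by norm_num
    obtain ⟨q, hqT, hqs, hqi, hqb⟩ := aux_proj (S i) (hclosed i) b hbT hbs hbn hbd
    refine ⟨i, q, hqT, ?_, hqs, hqi⟩
    intro hq0
    have : ‖q - p‖ ≤ 5/16 + 1/100 := by
      calc ‖q - p‖ = ‖(q - b) + (b - p)‖ := by abel_nf
        _ ≤ ‖q - b‖ + ‖b - p‖ := norm_add_le _ _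
        _ ≤ 5/16 + 1/100 := by linarith
    rw [hq0, zero_sub, norm_neg, hnp] at this
    norm_num at this
  · rintro ⟨i, p, _, hp⟩
    exact ⟨p, hp⟩
end

section
/- Let A be a C*-algebra, let (A_i)_{i ∈ I} be a family of closed *-subalgebras of A that is directed under inclusion and whose union is dense in A, and let N be a positive natural number. Then the C*-algebra M_N(A) of N×N matrices over A contains a nonzero projection if and only if there exists an index i such that M_N(A) contains a nonzero projection all of whose matrix entries lie in A_i. -/
open Filter Topology Finset
open scoped NNReal

set_option maxHeartbeats 1000000

/-- Newton iteration producing an idempotent near an approximate idempotent, inside a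
closed subset stable under `x ↦ 3x² - 2x³`. -/
theorem stmt2_exists_idempotent_near {B : Type*} [NonUnitalNormedRing B] [CompleteSpace B]
    (C : Set B) (hC : IsClosed C)
    (hstab : ∀ x ∈ C, 3 • (x*x) - 2 • (x*x*x) ∈ C)
    (c₀ : B) (h0 : c₀ ∈ C) (R δ : ℝ) (hR : ‖c₀‖ ≤ R)
    (hδ : ‖c₀*c₀ - c₀‖ ≤ δ) (hsmall : (3+2*R)*δ ≤ 1/100) :
    ∃ p ∈ C, p*p = p ∧ ‖p - c₀‖ ≤ 2*(3+2*R)*δ := by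
  have hR0 : (0:ℝ) ≤ R := le_trans (norm_nonneg _) hR
  have hδ0 : (0:ℝ) ≤ δ := le_trans (norm_nonneg _) hδ
  have hδ14 : δ ≤ 1/14 := by nlinarith
  set f : B → B := fun x => 3 • (x*x) - 2 • (x*x*x) with hf
  -- the two key estimates
  have key1 : ∀ x : B, ‖f x - x‖ ≤ (1 + 2*‖x‖) * ‖x*x - x‖ := by
    intro x
    have hid : f x - x = (x*x - x) - 2 • (x * (x*x - x)) := by simp only [hf]; noncomm_ring
    calc ‖f x - x‖ = ‖(x*x - x) - 2 • (x * (x*x - x))‖ := by rw [hid]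
      _ ≤ ‖x*x - x‖ + ‖2 • (x * (x*x - x))‖ := norm_sub_le _ _
      _ ≤ ‖x*x - x‖ + 2 * (‖x‖ * ‖x*x - x‖) := by
          rw [two_smul]
          have := norm_mul_le x (x*x - x)
          have h2 : ‖x * (x*x-x) + x * (x*x-x)‖ ≤ ‖x * (x*x-x)‖ + ‖x * (x*x-x)‖ :=
            norm_add_le _ _
          nlinarith [norm_nonneg (x * (x*x-x))]
      _ = (1 + 2*‖x‖) * ‖x*x - x‖ := by ring
  have key2 : ∀ x : B, ‖x*x - x‖ ≤ 1 → ‖f x * f x - f x‖ ≤ 7 * ‖x*x - x‖^2 := by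
    intro x hx1
    set y := x*x - x with hy
    have hid : f x * f x - f x = 4 • (y*y*y) - 3 • (y*y) := by simp only [hf, hy]; noncomm_ring
    have hyy : ‖y*y‖ ≤ ‖y‖^2 := by
      calc ‖y*y‖ ≤ ‖y‖*‖y‖ := norm_mul_le _ _
        _ = ‖y‖^2 := by ring
    have hyyy : ‖y*y*y‖ ≤ ‖y‖^2 := by
      calc ‖y*y*y‖ ≤ ‖y*y‖*‖y‖ := norm_mul_le _ _
        _ ≤ ‖y‖^2 * 1 := by
            apply mul_le_mul (le_trans hyy (le_refl _)) hx1 (norm_nonneg _)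
            positivity
        _ = ‖y‖^2 := by ring
    calc ‖f x * f x - f x‖ = ‖4 • (y*y*y) - 3 • (y*y)‖ := by rw [hid]
      _ ≤ ‖4 • (y*y*y)‖ + ‖3 • (y*y)‖ := norm_sub_le _ _
      _ ≤ 4 * ‖y*y*y‖ + 3 * ‖y*y‖ := by
          have h4 := norm_nsmul_le (n := 4) (a := y*y*y)
          have h3 := norm_nsmul_le (n := 3) (a := y*y)
          push_cast at h4 h3
          linarith
      _ ≤ 7 * ‖y‖^2 := by nlinarith
  -- the iteration
  set c : ℕ → B := fun n => f^[n] c₀ with hc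
  have hc0 : c 0 = c₀ := rfl
  have hcs : ∀ n, c (n+1) = f (c n) := fun n => Function.iterate_succ_apply' f n c₀
  have hmem : ∀ n, c n ∈ C := by
    intro n; induction n with
    | zero => exact h0
    | succ n ih => rw [hcs]; exact hstab _ ih
  -- main invariant
  have inv : ∀ n, ‖c n * c n - c n‖ ≤ δ * (1/2)^n ∧
      ‖c n - c 0‖ ≤ 2*(3+2*R)*δ*(1 - (1/2)^n) := by
    intro n; induction n with
    | zero =>
      refine ⟨?_, by simp⟩
      simpa [hc0] using hδ
    | succ n ih =>
      obtain ⟨ih1, ih2⟩ := ih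
      have hpow0 : (0:ℝ) < (1/2:ℝ)^n := by positivity
      have hpow1 : ((1:ℝ)/2)^n ≤ 1 := by
        apply pow_le_one₀ <;> norm_num
      have hδn1 : ‖c n * c n - c n‖ ≤ 1 := by nlinarith
      have hcnorm : ‖c n‖ ≤ R + 1 := by
        have h1 : ‖c n‖ - ‖c 0‖ ≤ ‖c n - c 0‖ := norm_sub_norm_le _ _
        have h2 : ‖c 0‖ ≤ R := hc0 ▸ hR
        have h3 : 2*(3+2*R)*δ*(1 - (1/2)^n) ≤ 1 := by nlinarith
        linarith
      have step1 : ‖c (n+1) * c (n+1) - c (n+1)‖ ≤ δ * (1/2)^(n+1) := by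
        rw [hcs]
        calc ‖f (c n) * f (c n) - f (c n)‖ ≤ 7 * ‖c n * c n - c n‖^2 := key2 _ hδn1
          _ ≤ δ * (1/2)^(n+1) := by
              have hnn : (0:ℝ) ≤ δ * (1/2)^n := by positivity
              have hy0 : (0:ℝ) ≤ ‖c n * c n - c n‖ := norm_nonneg _
              have h7 : 7 * ‖c n * c n - c n‖ ≤ 1/2 := by nlinarith
              have h8 := mul_le_mul_of_nonneg_left h7 hnn
              have e1 : 7*‖c n * c n - c n‖^2 ≤ (δ*(1/2)^n) * (7*‖c n * c n - c n‖) := by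
                nlinarith
              have hps : δ * (1/2:ℝ)^(n+1) = (δ*(1/2)^n) * (1/2) := by ring
              rw [hps]; linarith
      have step2 : ‖c (n+1) - c 0‖ ≤ 2*(3+2*R)*δ*(1 - (1/2)^(n+1)) := by
        have hinc : ‖c (n+1) - c n‖ ≤ (3+2*R) * (δ * (1/2)^n) := by
          rw [hcs]
          calc ‖f (c n) - c n‖ ≤ (1 + 2*‖c n‖) * ‖c n * c n - c n‖ := key1 _
            _ ≤ (3+2*R) * (δ * (1/2)^n) :=
                mul_le_mul (by linarith) ih1 (norm_nonneg _) (by linarith)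
        calc ‖c (n+1) - c 0‖ ≤ ‖c (n+1) - c n‖ + ‖c n - c 0‖ := by
                have := dist_triangle (c (n+1)) (c n) (c 0)
                simpa [dist_eq_norm] using this
          _ ≤ (3+2*R) * (δ * (1/2)^n) + 2*(3+2*R)*δ*(1 - (1/2)^n) := add_le_add hinc ih2
          _ = 2*(3+2*R)*δ*(1 - (1/2)^(n+1)) := by rw [pow_succ]; ring
      exact ⟨step1, step2⟩
  -- Cauchy
  have hcauchy : CauchySeq c := by
    apply cauchySeq_of_le_geometric (1/2) ((3+2*R)*δ) (by norm_num)
    intro n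
    rw [dist_eq_norm]
    have hpow0 : (0:ℝ) < (1/2:ℝ)^n := by positivity
    have hpow1 : ((1:ℝ)/2)^n ≤ 1 := by apply pow_le_one₀ <;> norm_num
    obtain ⟨ih1, ih2⟩ := inv n
    have hcnorm : ‖c n‖ ≤ R + 1 := by
      have h1 : ‖c n‖ - ‖c 0‖ ≤ ‖c n - c 0‖ := norm_sub_norm_le _ _
      have h2 : ‖c 0‖ ≤ R := hc0 ▸ hR
      have h3 : 2*(3+2*R)*δ*(1 - (1/2)^n) ≤ 1 := by nlinarith
      linarith
    rw [← neg_sub, norm_neg, hcs]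
    calc ‖f (c n) - c n‖ ≤ (1 + 2*‖c n‖) * ‖c n * c n - c n‖ := key1 _
      _ ≤ (3+2*R) * (δ * (1/2)^n) :=
          mul_le_mul (by linarith) ih1 (norm_nonneg _) (by linarith)
      _ = (3+2*R) * δ * (1/2)^n := by ring
  obtain ⟨p, hp⟩ := cauchySeq_tendsto_of_complete hcauchy
  refine ⟨p, hC.mem_of_tendsto hp (Eventually.of_forall hmem), ?_, ?_⟩
  · have h1 : Tendsto (fun n => c n * c n - c n) atTop (𝓝 (p*p - p)) :=
      ((hp.mul hp).sub hp)
    have h2 : Tendsto (fun n => c n * c n - c n) atTop (𝓝 0) := by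
      apply squeeze_zero_norm (fun n => (inv n).1)
      have : Tendsto (fun n:ℕ => δ * (1/2:ℝ)^n) atTop (𝓝 (δ * 0)) :=
        (tendsto_pow_atTop_nhds_zero_of_lt_one (by norm_num) (by norm_num)).const_mul δ
      simpa using this
    exact sub_eq_zero.mp (tendsto_nhds_unique h1 h2)
  · have hpc0 : c 0 = c₀ := rfl
    have htn : Tendsto (fun n => ‖c n - c₀‖) atTop (𝓝 ‖p - c₀‖) :=
      (hp.sub tendsto_const_nhds).norm
    apply le_of_tendsto htn
    apply Eventually.of_forall
    intro n
    have hpow0 : (0:ℝ) < (1/2:ℝ)^n := by positivity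
    have h2 := (inv n).2
    rw [hpc0] at h2
    have h4 : (0:ℝ) ≤ 2*(3+2*R)*δ*((1/2:ℝ)^n) :=
      mul_nonneg (mul_nonneg (mul_nonneg (by norm_num) (by linarith)) hδ0) hpow0.le
    nlinarith


section MatrixAux

variable {A : Type*} [NonUnitalNormedRing A] {N : ℕ}

attribute [local instance] Matrix.linftyOpNormedAddCommGroup Matrix.linftyOpNonUnitalNormedRing

theorem stmt2_entry_le (x : Matrix (Fin N) (Fin N) A) (k l : Fin N) : ‖x k l‖ ≤ ‖x‖ := by
  have h : ‖x k l‖₊ ≤ ‖x‖₊ := by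
    rw [Matrix.linfty_opNNNorm_def]
    calc ‖x k l‖₊ ≤ ∑ j, ‖x k j‖₊ :=
          Finset.single_le_sum (f := fun j => ‖x k j‖₊) (fun _ _ => zero_le) (mem_univ l)
      _ ≤ _ := Finset.le_sup (f := fun i => ∑ j, ‖x i j‖₊) (mem_univ k)
  exact h

theorem stmt2_norm_le_of_entries (x : Matrix (Fin N) (Fin N) A) (r : ℝ) (hr : 0 ≤ r)
    (h : ∀ k l, ‖x k l‖ ≤ r) : ‖x‖ ≤ N * r := by
  rw [Matrix.linfty_opNorm_def]
  have key : ∀ k : Fin N, (∑ j, ‖x k j‖₊ : ℝ≥0) ≤ ⟨r, hr⟩ * N := by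
    intro k
    calc (∑ j, ‖x k j‖₊ : ℝ≥0) ≤ ∑ _j : Fin N, (id ⟨r, hr⟩ : ℝ≥0) :=
          Finset.sum_le_sum (fun j _ => by
            have := h k j
            exact_mod_cast this)
      _ = N • (id ⟨r, hr⟩ : ℝ≥0) := by rw [Finset.sum_const, card_univ, Fintype.card_fin]
      _ = (id ⟨r, hr⟩ : ℝ≥0) * N := by rw [nsmul_eq_mul, mul_comm]
  calc ((Finset.univ.sup fun k : Fin N => ∑ j, ‖x k j‖₊ : ℝ≥0) : ℝ)
      ≤ ((⟨r, hr⟩ * N : ℝ≥0) : ℝ) := by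
        exact_mod_cast Finset.sup_le fun k _ => key k
    _ = N * r := by exact (NNReal.coe_mul _ _).trans (by rw [NNReal.coe_natCast]; exact mul_comm _ _)

theorem stmt2_entry_continuous (k l : Fin N) :
    Continuous (fun x : Matrix (Fin N) (Fin N) A => x k l) := by
  apply (LipschitzWith.of_dist_le_mul (K := 1) (fun x y => ?_)).continuous
  rw [dist_eq_norm, dist_eq_norm, NNReal.coe_one, one_mul]
  simpa [Matrix.sub_apply] using stmt2_entry_le (x - y) k l

end MatrixAux

section Main

attribute [local instance] Matrix.linftyOpNormedAddCommGroup Matrix.linftyOpNonUnitalNormedRing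

/-- Matrix-algebra form: if a C*-algebra `A` is the closure of a directed union of closed
*-subalgebras, then `M_N(A)` contains a nonzero projection iff, for some index `i`, it contains
a nonzero projection all of whose entries lie in `A_i`. -/
theorem stmt2 {A : Type*} [NonUnitalCStarAlgebra A]
    {ι : Type*} (S : ι → NonUnitalStarSubalgebra ℂ A)
    (hclosed : ∀ i, IsClosed ((S i : NonUnitalStarSubalgebra ℂ A) : Set A))
    (hdir : Directed (· ≤ ·) S)
    (hdense : Dense (⋃ i, ((S i : NonUnitalStarSubalgebra ℂ A) : Set A)))
    (N : ℕ) (hN : 0 < N) :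
    (∃ q : Matrix (Fin N) (Fin N) A, q ≠ 0 ∧ star q = q ∧ q * q = q) ↔
      ∃ i, ∃ q : Matrix (Fin N) (Fin N) A,
        (∀ k l : Fin N, q k l ∈ S i) ∧ q ≠ 0 ∧ star q = q ∧ q * q = q := by
  constructor
  · rintro ⟨q, hq0, hqstar, hqidem⟩
    classical
    haveI : @CompleteSpace (Matrix (Fin N) (Fin N) A) PseudoMetricSpace.toUniformSpace := by
      letI : CompleteSpace (Fin N → A) := Pi.complete _
      have : CompleteSpace (Fin N → Fin N → A) := Pi.complete _
      exact this
    set Q := ‖q‖ with hQdef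
    have hQpos : 0 < Q := norm_pos_iff.mpr hq0
    have hQ1 : 1 ≤ Q := by
      have h1 : Q ≤ Q * Q := by
        calc Q = ‖q * q‖ := by rw [hqidem]
          _ ≤ Q * Q := norm_mul_le q q
      nlinarith
    set ε : ℝ := 1 / (10000 * N * (Q+1)^2) with hεdef
    have hNpos : (0:ℝ) < N := by exact_mod_cast hN
    have hεpos : 0 < ε := by
      apply div_pos one_pos
      positivity
    have hNε : (N:ℝ) * ε = 1 / (10000 * (Q+1)^2) := by
      rw [hεdef]; field_simp
    -- approximate the entries from the union
    have H : ∀ k l : Fin N, ∃ a : A, (∃ i, a ∈ S i) ∧ dist (q k l) a < ε := by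
      intro k l
      have h1 := hdense (q k l)
      rw [Metric.mem_closure_iff] at h1
      obtain ⟨a, ha, hd⟩ := h1 ε hεpos
      simp only [Set.mem_iUnion, SetLike.mem_coe] at ha
      exact ⟨a, ha, hd⟩
    choose a ha hd using H
    choose idx hidx using ha
    haveI : Nonempty ι := ⟨idx ⟨0, hN⟩ ⟨0, hN⟩⟩
    obtain ⟨i₀, hi₀⟩ := hdir.finset_le
      (Finset.image (fun p : Fin N × Fin N => idx p.1 p.2) Finset.univ)
    have hmem : ∀ k l : Fin N, a k l ∈ S i₀ := by
      intro k l
      refine hi₀ (idx k l) ?_ (hidx k l)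
      exact Finset.mem_image.mpr ⟨(k, l), Finset.mem_univ _, rfl⟩
    -- symmetrized approximant
    set b : Matrix (Fin N) (Fin N) A := Matrix.of (fun k l => a k l) with hbdef
    set c₀ : Matrix (Fin N) (Fin N) A := (2⁻¹ : ℂ) • (b + star b) with hc₀def
    have hc₀star : star c₀ = c₀ := by
      rw [hc₀def, star_smul, star_add, star_star, add_comm]
      congr 1
      simp
    have hc₀mem : ∀ k l, c₀ k l ∈ S i₀ := by
      intro k l
      rw [hc₀def]
      simp only [Matrix.smul_apply, Matrix.add_apply, Matrix.star_apply, hbdef, Matrix.of_apply]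
      exact SMulMemClass.smul_mem _ (add_mem (hmem k l) (star_mem (hmem l k)))
    -- entrywise distance to q
    have hentry : ∀ k l, ‖c₀ k l - q k l‖ ≤ ε := by
      intro k l
      have hqkl : q k l = (2⁻¹ : ℂ) • (q k l + star (q l k)) := by
        have h1 : star (q l k) = q k l := by
          conv_rhs => rw [← hqstar]
          simp [Matrix.star_apply]
        rw [h1, smul_add]
        rw [← add_smul]
        norm_num
      have hc : c₀ k l = (2⁻¹ : ℂ) • (a k l + star (a l k)) := by
        rw [hc₀def]
        simp [hbdef, Matrix.smul_apply, Matrix.add_apply, Matrix.star_apply]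
      rw [hc, hqkl, ← smul_sub]
      have : a k l + star (a l k) - (q k l + star (q l k))
          = (a k l - q k l) + star (a l k - q l k) := by
        rw [star_sub]; abel
      rw [this]
      calc ‖(2⁻¹ : ℂ) • ((a k l - q k l) + star (a l k - q l k))‖
          = ‖(2⁻¹ : ℂ)‖ * ‖(a k l - q k l) + star (a l k - q l k)‖ := norm_smul _ _
        _ ≤ ‖(2⁻¹ : ℂ)‖ * (‖a k l - q k l‖ + ‖star (a l k - q l k)‖) := by
            apply mul_le_mul_of_nonneg_left (norm_add_le _ _) (norm_nonneg _)
        _ ≤ ε := by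
            rw [norm_star]
            have h1 : ‖a k l - q k l‖ ≤ ε := by
              have := hd k l; rw [dist_eq_norm] at this
              rw [← norm_neg]; simp only [neg_sub]; linarith
            have h2 : ‖a l k - q l k‖ ≤ ε := by
              have := hd l k; rw [dist_eq_norm] at this
              rw [← norm_neg]; simp only [neg_sub]; linarith
            have h3 : ‖(2⁻¹ : ℂ)‖ = 2⁻¹ := by norm_num
            rw [h3]; linarith
    have hclose : ‖c₀ - q‖ ≤ N * ε := by
      apply stmt2_norm_le_of_entries _ _ hεpos.le
      intro k l
      simpa [Matrix.sub_apply] using hentry k l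
    set R : ℝ := Q + 1 with hRdef
    have hc₀norm : ‖c₀‖ ≤ R := by
      have h1 : ‖c₀‖ ≤ ‖c₀ - q‖ + ‖q‖ := by
        have := norm_add_le (c₀ - q) q
        simpa using this
      have h2 : (N:ℝ) * ε ≤ 1 := by rw [hNε]; rw [div_le_one (by positivity)]; nlinarith
      simp only [hRdef]; linarith
    set δ : ℝ := N * ε * (2*Q + 2) with hδdef
    have hδbound : ‖c₀ * c₀ - c₀‖ ≤ δ := by
      have hid : c₀ * c₀ - c₀ = c₀ * (c₀ - q) + (c₀ - q) * q + (q * q - c₀) := by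
        noncomm_ring
      have h1 : ‖q * q - c₀‖ = ‖c₀ - q‖ := by rw [hqidem, ← norm_neg]; simp
      calc ‖c₀ * c₀ - c₀‖ = ‖c₀ * (c₀ - q) + (c₀ - q) * q + (q * q - c₀)‖ := by rw [hid]
        _ ≤ ‖c₀ * (c₀ - q) + (c₀ - q) * q‖ + ‖q * q - c₀‖ := norm_add_le _ _
        _ ≤ ‖c₀ * (c₀ - q)‖ + ‖(c₀ - q) * q‖ + ‖q * q - c₀‖ := by
            have := norm_add_le (c₀ * (c₀ - q)) ((c₀ - q) * q)
            linarith
        _ ≤ ‖c₀‖ * ‖c₀ - q‖ + ‖c₀ - q‖ * ‖q‖ + ‖c₀ - q‖ := by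
            have := norm_mul_le c₀ (c₀ - q)
            have := norm_mul_le (c₀ - q) q
            rw [h1]; linarith
        _ ≤ R * (N*ε) + (N*ε) * Q + (N*ε) := by
            have h0 : (0:ℝ) ≤ ‖c₀ - q‖ := norm_nonneg _
            have hQ0 : (0:ℝ) ≤ Q := hQpos.le
            have hc0 : (0:ℝ) ≤ ‖c₀‖ := norm_nonneg _
            nlinarith
        _ = δ := by rw [hδdef, hRdef]; ring
    have hsmall : (3 + 2*R) * δ ≤ 1/100 := by
      rw [hδdef, hRdef, hNε]
      have expand : (3+2*(Q+1)) * (1/(10000*(Q+1)^2) * (2*Q+2))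
          = ((3+2*(Q+1))*(2*Q+2)) / (10000*(Q+1)^2) := by ring
      have hpos : (0:ℝ) < 10000*(Q+1)^2 := by positivity
      rw [expand, div_le_iff₀ hpos]
      nlinarith
    -- the invariant closed set
    set C : Set (Matrix (Fin N) (Fin N) A) :=
      {x | (∀ k l, x k l ∈ S i₀) ∧ star x = x} with hCdef
    have hCclosed : IsClosed C := by
      have h1 : C = (⋂ k, ⋂ l, (fun x : Matrix (Fin N) (Fin N) A => x k l) ⁻¹'
            ((S i₀ : NonUnitalStarSubalgebra ℂ A) : Set A)) ∩
          (⋂ k, ⋂ l, {x : Matrix (Fin N) (Fin N) A | star (x l k) = x k l}) := by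
        ext x
        simp only [hCdef, Set.mem_setOf_eq, Set.mem_inter_iff, Set.mem_iInter, Set.mem_preimage,
          SetLike.mem_coe]
        constructor
        · rintro ⟨h1, h2⟩
          refine ⟨h1, fun k l => ?_⟩
          conv_rhs => rw [← h2]
          simp [Matrix.star_apply]
        · rintro ⟨h1, h2⟩
          refine ⟨h1, ?_⟩
          ext k l
          rw [Matrix.star_apply]
          exact h2 k l
      rw [h1]
      apply IsClosed.inter
      · exact isClosed_iInter fun k => isClosed_iInter fun l =>
          (hclosed i₀).preimage (stmt2_entry_continuous k l)
      · exact isClosed_iInter fun k => isClosed_iInter fun l =>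
          isClosed_eq (continuous_star.comp (stmt2_entry_continuous l k))
            (stmt2_entry_continuous k l)
    have hstab : ∀ x ∈ C, 3 • (x*x) - 2 • (x*x*x) ∈ C := by
      rintro x ⟨hx1, hx2⟩
      constructor
      · intro k l
        have hmul : ∀ y z : Matrix (Fin N) (Fin N) A, (∀ k l, y k l ∈ S i₀) →
            (∀ k l, z k l ∈ S i₀) → ∀ k l, (y * z) k l ∈ S i₀ := by
          intro y z hy hz k l
          rw [Matrix.mul_apply]
          exact sum_mem fun m _ => mul_mem (hy k m) (hz m l)
        have h2 := hmul x x hx1 hx1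
        have h3 := hmul (x*x) x h2 hx1
        have e1 : (3 • (x*x) - 2 • (x*x*x)) k l = 3 • ((x*x) k l) - 2 • ((x*x*x) k l) := rfl
        rw [e1]
        exact sub_mem (nsmul_mem (h2 k l) 3) (nsmul_mem (h3 k l) 2)
      · rw [star_sub, star_nsmul, star_nsmul, star_mul, star_mul, star_mul, hx2, mul_assoc]
    have hc₀C : c₀ ∈ C := ⟨hc₀mem, hc₀star⟩
    obtain ⟨p, hpC, hpidem, hpclose⟩ :=
      stmt2_exists_idempotent_near C hCclosed hstab c₀ hc₀C R δ hc₀norm hδbound hsmall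
    refine ⟨i₀, p, hpC.1, ?_, hpC.2, hpidem⟩
    -- p ≠ 0
    intro hp0
    have h1 : ‖p - q‖ ≤ 2*(3+2*R)*δ + N*ε := by
      calc ‖p - q‖ ≤ ‖p - c₀‖ + ‖c₀ - q‖ := by
            have := norm_add_le (p - c₀) (c₀ - q)
            simpa using this
        _ ≤ 2*(3+2*R)*δ + N*ε := add_le_add hpclose hclose
    have h2 : ‖p - q‖ = Q := by rw [hp0, zero_sub, norm_neg]
    have h3 : (N:ℝ)*ε ≤ 1/100 := by
      rw [hNε]
      have hpos : (0:ℝ) < 10000*(Q+1)^2 := by positivity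
      rw [div_le_div_iff₀ hpos (by norm_num)]
      nlinarith
    rw [h2] at h1
    nlinarith [hsmall, h3, hQ1, h1]
  · rintro ⟨i, q, _, hq0, hqstar, hqidem⟩
    exact ⟨q, hq0, hqstar, hqidem⟩

end Main
end
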